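/- Let M, A be weight sequences. Then A ⊂ M (i.e., A_p ≤ C H^p M_p for some C, H > 0 and all p) if and only if there exist C', H' > 0 with ω_M(t) ≤ ω_A(H' t) + log C' for all t ≥ 0, where ω_M, ω_A are the associated functions. -/

import Mathlib

open Real Set Filter

/-- A weight sequence: positive, log-convex, with `M_p^{1/p} → ∞`. -/
def IsWeightSeq (M : ℕ → ℝ) : Prop :=
  (∀ p, 0 < M p) ∧
  (∀ p : ℕ, 1 ≤ p → (M p) ^ 2 ≤ M (p - 1) * M (p + 1)) ∧
  Filter.Tendsto (fun p : ℕ => (M p) ^ ((1 : ℝ) / p)) Filter.atTop Filter.atTop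

/-- The associated function `ω_M(t) = sup_p log (t^p M₀ / M_p)`. -/
noncomputable def assocFun (M : ℕ → ℝ) (t : ℝ) : ℝ :=
  ⨆ p : ℕ, Real.log (t ^ p * M 0 / M p)

/-- The quotient sequence `m_p = M_{p+1}/M_p`. -/
noncomputable def mseq (M : ℕ → ℝ) (p : ℕ) : ℝ := M (p + 1) / M p

/-- The counting function `m(x) = #{p ≥ 1 : m_p ≤ x}` of the sequence `(m_p)`. -/
noncomputable def cntFun (M : ℕ → ℝ) (x : ℝ) : ℝ :=
  (Nat.card {p : ℕ // 1 ≤ p ∧ mseq M p ≤ x} : ℝ)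

lemma bddAbove_logTerms {M : ℕ → ℝ} (hM : IsWeightSeq M) (t : ℝ) (ht : 0 ≤ t) :
    BddAbove (Set.range fun p : ℕ => Real.log (t ^ p * M 0 / M p)) := by
  obtain ⟨hpos, -, htend⟩ := hM
  obtain ⟨N, hN⟩ := (htend.eventually_ge_atTop (t + 1)).exists_forall_of_atTop
  set N' := max N 1 with hN'
  have key : ∀ p, N' ≤ p → Real.log (t ^ p * M 0 / M p) ≤ max (Real.log (M 0)) 0 := by
    intro p hp
    have hp1 : 1 ≤ p := le_trans (le_max_right N 1) hp
    have h1 : t + 1 ≤ M p ^ ((1 : ℝ) / p) := hN p (le_trans (le_max_left N 1) hp)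
    have hpne : (p : ℝ) ≠ 0 := by positivity
    have h2 : (t + 1) ^ p ≤ M p := by
      have h := Real.rpow_le_rpow (by linarith) h1 (Nat.cast_nonneg p)
      rw [← Real.rpow_natCast (t + 1) p]
      calc (t + 1) ^ (p : ℝ) ≤ (M p ^ ((1:ℝ)/p)) ^ (p : ℝ) := h
        _ = M p ^ (((1:ℝ)/p) * p) := by
            rw [← Real.rpow_mul (hpos p).le]
        _ = M p := by rw [one_div, inv_mul_cancel₀ hpne, Real.rpow_one]
    have hMP := hpos p
    have h3 : t ^ p * M 0 / M p ≤ M 0 := by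
      rw [div_le_iff₀ hMP]
      have h4 : t ^ p ≤ M p := le_trans (pow_le_pow_left₀ ht (by linarith) p) h2
      nlinarith [hpos 0, h4]
    rcases eq_or_lt_of_le (div_nonneg (mul_nonneg (pow_nonneg ht p) (hpos 0).le)
      (hpos p).le) with h | h
    · rw [← h, Real.log_zero]; exact le_max_right _ _
    · exact le_trans (Real.log_le_log h h3) (le_max_left _ _)
  have hsub : Set.range (fun p : ℕ => Real.log (t ^ p * M 0 / M p)) ⊆
      ((fun p : ℕ => Real.log (t ^ p * M 0 / M p)) '' Set.Iio N') ∪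
      Set.Iic (max (Real.log (M 0)) 0) := by
    rintro x ⟨p, rfl⟩
    by_cases hp : p < N'
    · exact Or.inl ⟨p, hp, rfl⟩
    · exact Or.inr (key p (le_of_not_gt hp))
  exact BddAbove.mono hsub
    (((Set.finite_Iio N').image _).bddAbove.union bddAbove_Iic)

lemma assocFun_zero {M : ℕ → ℝ} (hM : 0 < M 0) : assocFun M 0 = 0 := by
  unfold assocFun
  have h : ∀ p : ℕ, Real.log ((0:ℝ) ^ p * M 0 / M p) = 0 := by
    intro p
    cases p with
    | zero => simp [div_self hM.ne']
    | succ n => simp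
  rw [show (fun p : ℕ => Real.log ((0:ℝ) ^ p * M 0 / M p)) = fun _ => (0:ℝ) from funext h,
    ciSup_const]

lemma mseq_mono {A : ℕ → ℝ} (hA : IsWeightSeq A) : Monotone (mseq A) := by
  apply monotone_nat_of_le_succ
  intro q
  have h := hA.2.1 (q + 1) (by omega)
  simp only [Nat.add_sub_cancel] at h
  have h0 := hA.1 q
  have h1 := hA.1 (q + 1)
  have h2 := hA.1 (q + 2)
  unfold mseq
  rw [div_le_div_iff₀ h0 h1]
  nlinarith [h]

lemma term_le {A : ℕ → ℝ} (hA : IsWeightSeq A) (p q : ℕ) :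
    (mseq A p) ^ q * A p ≤ (mseq A p) ^ p * A q := by
  have hpos := hA.1
  have hmono := mseq_mono hA
  set t := mseq A p with htdef
  have ht : 0 < t := div_pos (hpos (p + 1)) (hpos p)
  have step_le : ∀ j : ℕ, j ≤ p → A (j + 1) ≤ t * A j := by
    intro j hj
    have h : mseq A j ≤ t := hmono hj
    have := mul_le_mul_of_nonneg_right h (hpos j).le
    rwa [mseq, div_mul_cancel₀ _ (hpos j).ne'] at this
  have step_ge : ∀ j : ℕ, p ≤ j → t * A j ≤ A (j + 1) := by
    intro j hj
    have h : t ≤ mseq A j := hmono hj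
    have := mul_le_mul_of_nonneg_right h (hpos j).le
    rwa [mseq, div_mul_cancel₀ _ (hpos j).ne'] at this
  rcases le_total q p with h | h
  · -- q ≤ p : A p ≤ A q * t ^ (p - q)
    have aux : ∀ k : ℕ, k ≤ p → A p ≤ A (p - k) * t ^ k := by
      intro k
      induction k with
      | zero => intro _; simp
      | succ k ih =>
        intro hk
        have h1 := ih (by omega)
        have heq : p - k = (p - (k + 1)) + 1 := by omega
        have h2 : A (p - k) ≤ t * A (p - (k + 1)) := by
          rw [heq]; exact step_le _ (by omega)
        calc A p ≤ A (p - k) * t ^ k := h1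
          _ ≤ (t * A (p - (k + 1))) * t ^ k :=
              mul_le_mul_of_nonneg_right h2 (pow_nonneg ht.le k)
          _ = A (p - (k + 1)) * t ^ (k + 1) := by ring
    have h1 := aux (p - q) (by omega)
    have h2 : p - (p - q) = q := by omega
    rw [h2] at h1
    have h3 := mul_le_mul_of_nonneg_left h1 (pow_nonneg ht.le q)
    calc t ^ q * A p ≤ t ^ q * (A q * t ^ (p - q)) := h3
      _ = t ^ (q + (p - q)) * A q := by rw [pow_add]; ring
      _ = t ^ p * A q := by rw [show q + (p - q) = p by omega]
  · -- p ≤ q : t ^ k * A p ≤ A (p + k)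
    have aux : ∀ k : ℕ, t ^ k * A p ≤ A (p + k) := by
      intro k
      induction k with
      | zero => simp
      | succ k ih =>
        have h2 : t * A (p + k) ≤ A (p + k + 1) := step_ge _ (by omega)
        calc t ^ (k + 1) * A p = t * (t ^ k * A p) := by ring
          _ ≤ t * A (p + k) := mul_le_mul_of_nonneg_left ih ht.le
          _ ≤ A (p + (k + 1)) := h2
    have h1 := aux (q - p)
    have h3 := mul_le_mul_of_nonneg_left h1 (pow_nonneg ht.le p)
    calc t ^ q * A p = t ^ p * (t ^ (q - p) * A p) := by
          rw [← mul_assoc, ← pow_add, show p + (q - p) = q by omega]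
      _ ≤ t ^ p * A (p + (q - p)) := h3
      _ = t ^ p * A q := by rw [show p + (q - p) = q by omega]

/-- `A ⊂ M` (i.e. `A_p ≤ C H^p M_p`) iff `ω_M(t) ≤ ω_A(H' t) + log C'` for some
`C', H' > 0` and all `t ≥ 0`. -/
theorem subset_iff_assocFun_estimate (M A : ℕ → ℝ)
    (hM : IsWeightSeq M) (hA : IsWeightSeq A) :
    (∃ C H : ℝ, 0 < C ∧ 0 < H ∧ ∀ p : ℕ, A p ≤ C * H ^ p * M p) ↔
    (∃ C' H' : ℝ, 0 < C' ∧ 0 < H' ∧ ∀ t ≥ (0:ℝ),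
      assocFun M t ≤ assocFun A (H' * t) + Real.log C') := by
  have hMpos := hM.1
  have hApos := hA.1
  constructor
  · rintro ⟨C, H, hC, hH, hCH⟩
    refine ⟨max (C * M 0 / A 0) 1, H, lt_of_lt_of_le one_pos (le_max_right _ _), hH, ?_⟩
    set C' := max (C * M 0 / A 0) 1 with hC'def
    have hC' : (0:ℝ) < C' := lt_of_lt_of_le one_pos (le_max_right _ _)
    intro t ht
    rcases eq_or_lt_of_le ht with h0 | h0
    · rw [← h0, mul_zero, assocFun_zero (hMpos 0), assocFun_zero (hApos 0)]
      have : (0:ℝ) ≤ Real.log C' := Real.log_nonneg (le_max_right _ _)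
      linarith
    · apply ciSup_le
      intro p
      have ha : (0:ℝ) < t ^ p * M 0 / M p :=
        div_pos (mul_pos (pow_pos h0 p) (hMpos 0)) (hMpos p)
      have hb : (0:ℝ) < (H * t) ^ p * A 0 / A p :=
        div_pos (mul_pos (pow_pos (mul_pos hH h0) p) (hApos 0)) (hApos p)
      have h1 : t ^ p * M 0 / M p ≤ ((H * t) ^ p * A 0 / A p) * (C * M 0 / A 0) := by
        rw [mul_pow, div_mul_div_comm, div_le_div_iff₀ (hMpos p) (mul_pos (hApos p) (hApos 0))]
        nlinarith [mul_le_mul_of_nonneg_left (hCH p)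
          (mul_nonneg (mul_nonneg (pow_pos h0 p).le (hMpos 0).le) (hApos 0).le)]
      have hab : t ^ p * M 0 / M p ≤ ((H * t) ^ p * A 0 / A p) * C' :=
        h1.trans (mul_le_mul_of_nonneg_left (le_max_left _ _) hb.le)
      calc Real.log (t ^ p * M 0 / M p)
          ≤ Real.log (((H * t) ^ p * A 0 / A p) * C') := Real.log_le_log ha hab
        _ = Real.log ((H * t) ^ p * A 0 / A p) + Real.log C' :=
            Real.log_mul hb.ne' hC'.ne'
        _ ≤ assocFun A (H * t) + Real.log C' := by
            have := le_ciSup (bddAbove_logTerms hA (H * t) (mul_pos hH h0).le) p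
            exact add_le_add_left this _
  · rintro ⟨C', H', hC', hH', hest⟩
    refine ⟨C' * A 0 / M 0, H', div_pos (mul_pos hC' (hApos 0)) (hMpos 0), hH', ?_⟩
    intro p
    set s := mseq A p with hsdef
    have hs : 0 < s := div_pos (hApos (p + 1)) (hApos p)
    set t := s / H' with htdef
    have htpos : 0 < t := div_pos hs hH'
    have h4 : assocFun A s ≤ Real.log (s ^ p * A 0 / A p) := by
      apply ciSup_le
      intro q
      have hterm := term_le hA p q
      have h5 : s ^ q * A 0 / A q ≤ s ^ p * A 0 / A p := by
        rw [div_le_div_iff₀ (hApos q) (hApos p)]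
        nlinarith [mul_le_mul_of_nonneg_left hterm (hApos 0).le]
      exact Real.log_le_log (div_pos (mul_pos (pow_pos hs q) (hApos 0)) (hApos q)) h5
    have hst : H' * t = s := by
      rw [htdef, mul_div_assoc', mul_comm, mul_div_assoc, div_self hH'.ne', mul_one]
    have hlog : Real.log (t ^ p * M 0 / M p) ≤ Real.log ((s ^ p * A 0 / A p) * C') := by
      calc Real.log (t ^ p * M 0 / M p)
          ≤ assocFun M t := le_ciSup (bddAbove_logTerms hM t htpos.le) p
        _ ≤ assocFun A (H' * t) + Real.log C' := hest t htpos.le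
        _ = assocFun A s + Real.log C' := by rw [hst]
        _ ≤ Real.log (s ^ p * A 0 / A p) + Real.log C' := add_le_add_left h4 _
        _ = Real.log ((s ^ p * A 0 / A p) * C') :=
            (Real.log_mul (div_pos (mul_pos (pow_pos hs p) (hApos 0)) (hApos p)).ne'
              hC'.ne').symm
    have hineq : t ^ p * M 0 / M p ≤ s ^ p * A 0 / A p * C' :=
      (Real.log_le_log_iff (div_pos (mul_pos (pow_pos htpos p) (hMpos 0)) (hMpos p))
        (mul_pos (div_pos (mul_pos (pow_pos hs p) (hApos 0)) (hApos p)) hC')).mp hlog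
    rw [htdef, div_pow, div_mul_eq_mul_div, div_div, div_mul_eq_mul_div,
      div_le_div_iff₀ (mul_pos (pow_pos hH' p) (hMpos p)) (hApos p)] at hineq
    -- hineq : s ^ p * M 0 * A p ≤ s ^ p * A 0 * C' * (H' ^ p * M p)
    have hsp : (0:ℝ) < s ^ p := pow_pos hs p
    have h2 : M 0 * A p ≤ A 0 * C' * (H' ^ p * M p) := by
      have h3 : s ^ p * (M 0 * A p) ≤ s ^ p * (A 0 * C' * (H' ^ p * M p)) := by
        nlinarith [hineq]
      exact le_of_mul_le_mul_left h3 hsp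
    rw [div_mul_eq_mul_div, div_mul_eq_mul_div, le_div_iff₀ (hMpos 0)]
    nlinarith [h2]
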